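/- Let E be a finite-dimensional complex normed space, p ∈ ℂ with |p| > 1, and A > 0. For each integer r ≥ 1 let g_r : Eʳ → E be a continuous r-multilinear map with operator norm ‖g_r‖ ≤ Aʳ. Suppose (f_k)_{k≥1} is a sequence in E such that for every k ≥ 1 the recursion (pᵏ·id_E − g₁)(f_k) = Σ_{r=2}^{k} Σ_{(i₁,…,i_r)} g_r(f_{i₁}, …, f_{i_r}) holds, where the inner sum ranges over all r-tuples (i₁,…,i_r) of positive integers with i₁ + ⋯ + i_r = k. Then there exist constants C > 0 and B ≥ 1 such that ‖f_k‖ ≤ C·B^{k−1} for all k ≥ 1; in particular the power series Σ_{k≥1} f_k zᵏ has positive radius of convergence. -/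

import Mathlib

/-- The one-variable power series `Σ_{k ≥ 1} f_k zᵏ` with coefficients `f_k ∈ E`,
viewed as a formal multilinear series from `ℂ` to `E`. -/
noncomputable def coeffSeries {E : Type*} [NormedAddCommGroup E] [NormedSpace ℂ E]
    (f : ℕ → E) : FormalMultilinearSeries ℂ ℂ E :=
  fun k => if k = 0 then 0 else ContinuousMultilinearMap.mkPiRing ℂ (Fin k) (f k)

open scoped NNReal ENNReal

lemma sum_pow_card {α : Type*} [Fintype α] [DecidableEq α] (x : ℝ) :
    ∑ T : Finset α, x ^ T.card = (1 + x) ^ Fintype.card α := by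
  have h := Finset.prod_add (fun _ : α => x) (fun _ : α => 1) Finset.univ
  simp only [Finset.prod_const, one_pow, mul_one] at h
  rw [add_comm x 1] at h
  rw [← Finset.card_univ, h, Finset.powerset_univ]

lemma boundaries_injective (k : ℕ) :
    Function.Injective (fun c : Composition k => c.boundaries) := by
  intro c₁ c₂ h
  have h1 : c₁.toCompositionAsSet = c₂.toCompositionAsSet := by
    apply CompositionAsSet.ext
    rw [Composition.toCompositionAsSet_boundaries, Composition.toCompositionAsSet_boundaries]
    exact h
  exact (compositionEquiv k).injective h1

lemma sum_comp_pow_length (k : ℕ) {x : ℝ} (hx : 0 < x) :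
    x * ∑ c : Composition k, x ^ c.length ≤ (1 + x) ^ (k + 1) := by
  have key : x * ∑ c : Composition k, x ^ c.length
      = ∑ c : Composition k, x ^ c.boundaries.card := by
    rw [Finset.mul_sum]
    refine Finset.sum_congr rfl fun c _ => ?_
    rw [c.card_boundaries_eq_succ_length, pow_succ, mul_comm]
  rw [key]
  have himg : ∑ c : Composition k, x ^ c.boundaries.card
      = ∑ T ∈ Finset.univ.image (fun c : Composition k => c.boundaries), x ^ T.card := by
    rw [Finset.sum_image (fun a _ b _ h => boundaries_injective k h)]
  rw [himg]
  calc ∑ T ∈ Finset.univ.image (fun c : Composition k => c.boundaries), x ^ T.card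
      ≤ ∑ T : Finset (Fin (k+1)), x ^ T.card := by
        apply Finset.sum_le_sum_of_subset_of_nonneg (Finset.subset_univ _)
        intro i _ _; positivity
    _ = (1 + x) ^ (k + 1) := by rw [sum_pow_card]; simp

lemma blocksFun_lt {k : ℕ} (c : Composition k) (hc : 2 ≤ c.length) (i : Fin c.length) :
    c.blocksFun i < k := by
  have hcard : 1 < Fintype.card (Fin c.length) := by simpa using (show 1 < c.length by omega)
  obtain ⟨j, hj⟩ := Fintype.exists_ne_of_one_lt_card hcard i
  calc c.blocksFun i
      < ∑ l, c.blocksFun l :=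
        Finset.single_lt_sum hj (Finset.mem_univ _) (Finset.mem_univ _)
          (c.one_le_blocksFun j) fun _ _ _ => Nat.zero_le _
    _ = k := c.sum_blocksFun

set_option maxHeartbeats 1000000

/-- geometric growth estimate, inductive core of the appendix.
Let `E` be a finite-dimensional complex normed space, `p ∈ ℂ` with `|p| > 1`,
`A > 0`, and for each `r ≥ 1` a continuous `r`-multilinear map `g_r : Eʳ → E`
with `‖g_r‖ ≤ Aʳ`.  If `(f_k)_{k≥1}` satisfies the recursion
`(pᵏ•id − g₁)(f_k) = Σ_{r=2}^{k} Σ_{i₁+⋯+i_r = k, i_j ≥ 1} g_r(f_{i₁},…,f_{i_r})`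
(the inner sums being encoded by compositions of `k` of length `r ≥ 2`), then
there are `C > 0` and `B ≥ 1` with `‖f_k‖ ≤ C·B^(k−1)` for all `k ≥ 1`; in
particular the power series `Σ_{k≥1} f_k zᵏ` has positive radius of
convergence. -/
theorem growth_estimate_of_recursion
    {E : Type*} [NormedAddCommGroup E] [NormedSpace ℂ E] [FiniteDimensional ℂ E]
    (p : ℂ) (hp : 1 < ‖p‖) (A : ℝ) (hA : 0 < A)
    (g : (r : ℕ) → ContinuousMultilinearMap ℂ (fun _ : Fin r => E) E)
    (hg : ∀ r : ℕ, 1 ≤ r → ‖g r‖ ≤ A ^ r)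
    (f : ℕ → E)
    (hrec : ∀ k : ℕ, 1 ≤ k →
      p ^ k • f k - g 1 (fun _ => f k) =
        ∑ c ∈ Finset.univ.filter (fun c : Composition k => 2 ≤ c.length),
          g c.length (fun j => f (c.blocksFun j))) :
    ∃ C > (0 : ℝ), ∃ B ≥ (1 : ℝ),
      (∀ k : ℕ, 1 ≤ k → ‖f k‖ ≤ C * B ^ (k - 1)) ∧
        0 < (coeffSeries f).radius := by
  classical
  set a : ℝ := ‖p‖ with ha
  have ha1 : 1 < a := hp
  have ha0 : 0 < a := lt_trans one_pos ha1
  have hsqrt : 1 < Real.sqrt a := by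
    rw [show (1:ℝ) = Real.sqrt 1 from Real.sqrt_one.symm]
    exact Real.sqrt_lt_sqrt zero_le_one ha1
  set x : ℝ := min (Real.sqrt a - 1) 1 with hxdef
  have hx0 : 0 < x := lt_min (by linarith) one_pos
  have hx1 : x ≤ 1 := min_le_right _ _
  set t : ℝ := 1 + x with htdef
  have ht1 : 1 < t := by rw [htdef]; linarith
  have ht0 : 0 < t := lt_trans one_pos ht1
  have hta : t ^ 2 ≤ a := by
    have h1 : t ≤ Real.sqrt a := by
      have h2 : x ≤ Real.sqrt a - 1 := min_le_left _ _
      rw [htdef]; linarith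
    calc t ^ 2 ≤ Real.sqrt a ^ 2 := pow_le_pow_left₀ ht0.le h1 2
      _ = a := Real.sq_sqrt ha0.le
  obtain ⟨k₀, hk₀⟩ := pow_unbounded_of_one_lt (2 * A / x ^ 2) ht1
  set C : ℝ := 1 + x / A + ∑ j ∈ Finset.range (k₀ + 2), ‖f j‖ with hCdef
  have hsum_nonneg : 0 ≤ ∑ j ∈ Finset.range (k₀ + 2), ‖f j‖ :=
    Finset.sum_nonneg fun _ _ => norm_nonneg _
  have hxA : 0 ≤ x / A := by positivity
  have hC1 : 1 ≤ C := by rw [hCdef]; linarith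
  have hC0 : 0 < C := lt_of_lt_of_le one_pos hC1
  have hCxA : x / A ≤ C := by rw [hCdef]; linarith
  have hCf : ∀ j, j ≤ k₀ + 1 → ‖f j‖ ≤ C := by
    intro j hj
    have h1 : ‖f j‖ ≤ ∑ i ∈ Finset.range (k₀ + 2), ‖f i‖ :=
      Finset.single_le_sum (fun _ _ => norm_nonneg _) (Finset.mem_range.2 (by omega))
    rw [hCdef]; linarith
  set B : ℝ := A * C / x with hBdef
  have hB0 : 0 < B := by rw [hBdef]; positivity
  have hB1 : 1 ≤ B := by
    rw [hBdef, le_div_iff₀ hx0, one_mul]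
    calc x = A * (x / A) := by field_simp
      _ ≤ A * C := mul_le_mul_of_nonneg_left hCxA hA.le
  have hACxB : A * C = x * B := by rw [hBdef]; field_simp
  have main : ∀ k : ℕ, 1 ≤ k → ‖f k‖ ≤ C * B ^ (k - 1) := by
    intro k
    induction k using Nat.strong_induction_on with
    | _ k IH =>
      intro hk1
      by_cases hsmall : k ≤ k₀ + 1
      · calc ‖f k‖ ≤ C := hCf k hsmall
          _ ≤ C * B ^ (k - 1) :=
            le_mul_of_one_le_right hC0.le (one_le_pow₀ hB1)
      · push_neg at hsmall
        have hrk := hrec k hk1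
        set Sv : E := ∑ c ∈ Finset.univ.filter (fun c : Composition k => 2 ≤ c.length),
          g c.length (fun j => f (c.blocksFun j)) with hSvdef
        -- termwise estimate
        have hterm : ∀ c : Composition k, 2 ≤ c.length →
            ‖g c.length (fun j => f (c.blocksFun j))‖ ≤ B ^ k * x ^ c.length := by
          intro c hc
          have hlen1 : 1 ≤ c.length := le_trans (by norm_num) hc
          have h1 : ‖g c.length (fun j => f (c.blocksFun j))‖
              ≤ ‖g c.length‖ * ∏ j, ‖f (c.blocksFun j)‖ :=
            (g c.length).le_opNorm _
          have h2 : ∏ j, ‖f (c.blocksFun j)‖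
              ≤ ∏ j : Fin c.length, (C * B ^ (c.blocksFun j - 1)) := by
            apply Finset.prod_le_prod (fun _ _ => norm_nonneg _)
            intro j _
            exact IH (c.blocksFun j) (blocksFun_lt c hc j) (c.one_le_blocksFun j)
          have hsumblocks : ∑ j : Fin c.length, (c.blocksFun j - 1) = k - c.length := by
            have h := c.sum_blocksFun
            have h' : ∑ j : Fin c.length, c.blocksFun j
                = ∑ j : Fin c.length, ((c.blocksFun j - 1) + 1) :=
              Finset.sum_congr rfl fun j _ => (Nat.sub_add_cancel (c.one_le_blocksFun j)).symm
            rw [h', Finset.sum_add_distrib, Finset.sum_const, Finset.card_univ,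
              Fintype.card_fin, smul_eq_mul, mul_one] at h
            omega
          have h3 : ∏ j : Fin c.length, (C * B ^ (c.blocksFun j - 1))
              = C ^ c.length * B ^ (k - c.length) := by
            rw [Finset.prod_mul_distrib, Finset.prod_const, Finset.card_univ, Fintype.card_fin,
              Finset.prod_pow_eq_pow_sum, hsumblocks]
          have h4 : A ^ c.length * (C ^ c.length * B ^ (k - c.length))
              = B ^ k * x ^ c.length := by
            rw [← mul_assoc, ← mul_pow, hACxB, mul_pow, mul_assoc, ← pow_add,
              Nat.add_sub_cancel' c.length_le]
            ring
          calc ‖g c.length (fun j => f (c.blocksFun j))‖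
              ≤ ‖g c.length‖ * ∏ j, ‖f (c.blocksFun j)‖ := h1
            _ ≤ A ^ c.length * (C ^ c.length * B ^ (k - c.length)) := by
                apply mul_le_mul (hg c.length hlen1) (h2.trans_eq h3)
                  (Finset.prod_nonneg fun _ _ => norm_nonneg _) (by positivity)
            _ = B ^ k * x ^ c.length := h4
        -- sum estimate
        have hS : ‖Sv‖ ≤ B ^ k * ∑ c : Composition k, x ^ c.length := by
          rw [hSvdef]
          calc ‖∑ c ∈ Finset.univ.filter (fun c : Composition k => 2 ≤ c.length),
                g c.length (fun j => f (c.blocksFun j))‖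
              ≤ ∑ c ∈ Finset.univ.filter (fun c : Composition k => 2 ≤ c.length),
                ‖g c.length (fun j => f (c.blocksFun j))‖ := norm_sum_le _ _
            _ ≤ ∑ c ∈ Finset.univ.filter (fun c : Composition k => 2 ≤ c.length),
                B ^ k * x ^ c.length :=
                Finset.sum_le_sum fun c hc => hterm c (Finset.mem_filter.1 hc).2
            _ ≤ ∑ c : Composition k, B ^ k * x ^ c.length :=
                Finset.sum_le_sum_of_subset_of_nonneg (Finset.filter_subset _ _)
                  (fun _ _ _ => by positivity)
            _ = B ^ k * ∑ c : Composition k, x ^ c.length := by rw [Finset.mul_sum]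
        have hS2 : x * ‖Sv‖ ≤ B ^ k * t ^ (k + 1) := by
          calc x * ‖Sv‖
              ≤ x * (B ^ k * ∑ c : Composition k, x ^ c.length) :=
                mul_le_mul_of_nonneg_left hS hx0.le
            _ = B ^ k * (x * ∑ c : Composition k, x ^ c.length) := by ring
            _ ≤ B ^ k * t ^ (k + 1) :=
                mul_le_mul_of_nonneg_left (sum_comp_pow_length k hx0) (by positivity)
        -- lower bound on the left-hand side
        have hg1 : ‖g 1 (fun _ => f k)‖ ≤ A * ‖f k‖ := by
          calc ‖g 1 (fun _ => f k)‖ ≤ ‖g 1‖ * ∏ _j : Fin 1, ‖f k‖ := (g 1).le_opNorm _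
            _ = ‖g 1‖ * ‖f k‖ := by simp
            _ ≤ A * ‖f k‖ := by
                apply mul_le_mul_of_nonneg_right _ (norm_nonneg _)
                simpa using hg 1 le_rfl
        have hsmulnorm : ‖p ^ k • f k‖ = a ^ k * ‖f k‖ := by
          rw [norm_smul, norm_pow]
        have hlow : a ^ k * ‖f k‖ - A * ‖f k‖ ≤ ‖Sv‖ := by
          rw [← hrk]
          calc a ^ k * ‖f k‖ - A * ‖f k‖
              ≤ ‖p ^ k • f k‖ - ‖g 1 (fun _ => f k)‖ := by rw [hsmulnorm]; linarith
            _ ≤ ‖p ^ k • f k - g 1 (fun _ => f k)‖ := norm_sub_norm_le _ _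
        -- growth facts
        have hgeo : 2 * A ≤ x ^ 2 * t ^ (k - 1) := by
          have h1 : 2 * A / x ^ 2 ≤ t ^ (k - 1) :=
            le_trans hk₀.le (pow_le_pow_right₀ ht1.le (by omega))
          rw [div_le_iff₀ (by positivity)] at h1
          linarith [h1]
        have htak : t ^ (2 * k) ≤ a ^ k := by
          rw [pow_mul]
          exact pow_le_pow_left₀ (by positivity) hta k
        have hak2A : 2 * A ≤ a ^ k := by
          have hx2le : x ^ 2 ≤ 1 := by nlinarith
          have h1 : x ^ 2 * t ^ (k - 1) ≤ t ^ (k - 1) := by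
            calc x ^ 2 * t ^ (k - 1) ≤ 1 * t ^ (k - 1) :=
                mul_le_mul_of_nonneg_right hx2le (pow_pos ht0 _).le
              _ = t ^ (k - 1) := one_mul _
          have h2 : t ^ (k - 1) ≤ t ^ (2 * k) := pow_le_pow_right₀ ht1.le (by omega)
          linarith
        have key : 2 * A * t ^ (k + 1) ≤ x ^ 2 * a ^ k := by
          calc 2 * A * t ^ (k + 1) ≤ (x ^ 2 * t ^ (k - 1)) * t ^ (k + 1) :=
              mul_le_mul_of_nonneg_right hgeo (by positivity)
            _ = x ^ 2 * t ^ (2 * k) := by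
                rw [mul_assoc, ← pow_add]
                congr 2
                omega
            _ ≤ x ^ 2 * a ^ k := mul_le_mul_of_nonneg_left htak (by positivity)
        -- combine
        have hBk : B ^ k = B ^ (k - 1) * B := by
          rw [← pow_succ]
          congr 1
          omega
        have hfinal : x ^ 2 * ((a ^ k - A) * ‖f k‖)
            ≤ B ^ (k - 1) * (A * C) * t ^ (k + 1) := by
          have h1 : x * ((a ^ k - A) * ‖f k‖) ≤ B ^ k * t ^ (k + 1) := by
            calc x * ((a ^ k - A) * ‖f k‖)
                ≤ x * ‖Sv‖ := by
                  apply mul_le_mul_of_nonneg_left _ hx0.le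
                  calc (a ^ k - A) * ‖f k‖ = a ^ k * ‖f k‖ - A * ‖f k‖ := by ring
                    _ ≤ _ := hlow
              _ ≤ B ^ k * t ^ (k + 1) := hS2
          calc x ^ 2 * ((a ^ k - A) * ‖f k‖) = x * (x * ((a ^ k - A) * ‖f k‖)) := by ring
            _ ≤ x * (B ^ k * t ^ (k + 1)) := mul_le_mul_of_nonneg_left h1 hx0.le
            _ = B ^ (k - 1) * (x * B) * t ^ (k + 1) := by rw [hBk]; ring
            _ = B ^ (k - 1) * (A * C) * t ^ (k + 1) := by rw [← hACxB]
        have hgap : A * t ^ (k + 1) ≤ x ^ 2 * (a ^ k - A) := by nlinarith [key, hak2A]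
        have hlast : A * t ^ (k + 1) * ‖f k‖ ≤ A * t ^ (k + 1) * (C * B ^ (k - 1)) := by
          calc A * t ^ (k + 1) * ‖f k‖ ≤ x ^ 2 * (a ^ k - A) * ‖f k‖ :=
              mul_le_mul_of_nonneg_right hgap (norm_nonneg _)
            _ ≤ B ^ (k - 1) * (A * C) * t ^ (k + 1) := by rw [mul_assoc]; exact hfinal
            _ = A * t ^ (k + 1) * (C * B ^ (k - 1)) := by ring
        exact le_of_mul_le_mul_left hlast (by positivity)
  refine ⟨C, hC0, B, hB1, main, ?_⟩
  have hr : (0:ℝ) < 1 / B := by positivity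
  have hle : (((1 / B : ℝ).toNNReal : ℝ≥0) : ℝ≥0∞) ≤ (coeffSeries f).radius := by
    apply FormalMultilinearSeries.le_radius_of_bound _ C
    intro n
    have hcoe : (((1 / B : ℝ).toNNReal : ℝ≥0) : ℝ) = 1 / B := Real.coe_toNNReal _ hr.le
    rw [hcoe]
    match n with
    | 0 => simpa [coeffSeries] using hC0.le
    | (m + 1) =>
      have hnorm : ‖coeffSeries f (m + 1)‖ = ‖f (m + 1)‖ := by
        simp [coeffSeries, ContinuousMultilinearMap.norm_mkPiRing]
      rw [hnorm]
      have h2 := main (m + 1) (by omega)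
      simp only [Nat.add_sub_cancel] at h2
      have hBne : B ≠ 0 := hB0.ne'
      calc ‖f (m + 1)‖ * (1 / B) ^ (m + 1)
          ≤ (C * B ^ m) * (1 / B) ^ (m + 1) :=
            mul_le_mul_of_nonneg_right h2 (by positivity)
        _ = C * (1 / B) := by
            rw [pow_succ]
            field_simp
            ring_nf
            rw [← mul_pow, mul_inv_cancel₀ hBne, one_pow]
        _ ≤ C := by
            apply mul_le_of_le_one_right hC0.le
            rw [div_le_one hB0]
            exact hB1
  refine lt_of_lt_of_le ?_ hle
  exact_mod_cast ENNReal.coe_pos.2 (Real.toNNReal_pos.2 hr)
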